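/- Let X be a measurable space and Φ : Ω → Measure(X) a point process, i.e. a measurable map into finite measures on X, whose intensity measure Λ, defined by Λ(B) = E[Φ(B)] for Borel sets B, is finite with 0 < Λ(X) < ∞. Let ℱ be a class of probability measures on X containing the normalized intensity Λ* = Λ / Λ(X), and let S' : ℱ × X → ℝ be a measurable strictly consistent scoring function for the identity on ℱ (i.e. ∫ S'(Q, x) dP(x) ≥ ∫ S'(P, x) dP(x) for all P, Q ∈ ℱ, with equality iff Q = P), such that S'(Q, ·) is Λ-integrable for all Q ∈ ℱ. Define the scoring function S(Q, φ) = ∫_X S'(Q, x) dφ(x) for finite counting measures φ (with S(Q, ∅) = 0). Then by Campbell's theorem, for every Q ∈ ℱ, E[S(Q, Φ)] ≥ E[S(Λ*, Φ)], with equality if and only if Q = Λ*; i.e. S is a strictly consistent scoring function for the normalized intensity measure. -/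

import Mathlib

open MeasureTheory ENNReal

/-- **Campbell's theorem** for Bochner integrals: if `Λ = μ.bind Φ` and `f` is
measurable and `Λ`-integrable, then `∫ ω, ∫ x, f x ∂(Φ ω) ∂μ = ∫ x, f x ∂Λ`. -/
lemma campbell_aux {Ω X : Type*} [MeasurableSpace Ω] [MeasurableSpace X]
    (μ : Measure Ω) (Φ : Ω → Measure X) (hΦ : Measurable Φ)
    (Λ : Measure X) (hbind : Λ = μ.bind Φ)
    {f : X → ℝ} (hf : Measurable f) (hint : Integrable f Λ) :
    ∫ ω, ∫ x, f x ∂(Φ ω) ∂μ = ∫ x, f x ∂Λ := by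
  have key : ∀ g : X → ℝ≥0∞, Measurable g →
      ∫⁻ ω, ∫⁻ x, g x ∂(Φ ω) ∂μ = ∫⁻ x, g x ∂Λ := fun g hg => by
    rw [hbind, Measure.lintegral_bind hΦ.aemeasurable hg.aemeasurable]
  set gp : Ω → ℝ≥0∞ := fun ω => ∫⁻ x, ENNReal.ofReal (f x) ∂(Φ ω) with hgp
  set gn : Ω → ℝ≥0∞ := fun ω => ∫⁻ x, ENNReal.ofReal (-f x) ∂(Φ ω) with hgn
  have hmp : Measurable gp := (Measure.measurable_lintegral hf.ennreal_ofReal).comp hΦ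
  have hmn : Measurable gn := (Measure.measurable_lintegral hf.neg.ennreal_ofReal).comp hΦ
  have habs : ∀ x : X, (‖f x‖₊ : ℝ≥0∞) = ENNReal.ofReal (f x) + ENNReal.ofReal (-f x) := by
    intro x
    rcases le_total 0 (f x) with h | h
    · have h1 : ENNReal.ofReal (-f x) = 0 := ENNReal.ofReal_eq_zero.2 (by linarith)
      rw [h1, add_zero, ← enorm_eq_nnnorm, ← ofReal_norm, Real.norm_eq_abs, abs_of_nonneg h]
    · have h1 : ENNReal.ofReal (f x) = 0 := ENNReal.ofReal_eq_zero.2 h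
      rw [h1, zero_add, ← enorm_eq_nnnorm, ← ofReal_norm, Real.norm_eq_abs, abs_of_nonpos h]
  have hfin_p : ∫⁻ ω, gp ω ∂μ ≠ ∞ := by
    rw [key _ hf.ennreal_ofReal]
    refine ne_of_lt (lt_of_le_of_lt (lintegral_mono fun x => ?_) hint.2)
    rw [enorm_eq_nnnorm, habs x]; exact le_self_add
  have hfin_n : ∫⁻ ω, gn ω ∂μ ≠ ∞ := by
    rw [key (fun x => ENNReal.ofReal (-f x)) hf.neg.ennreal_ofReal]
    refine ne_of_lt (lt_of_le_of_lt (lintegral_mono fun x => ?_) hint.2)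
    rw [enorm_eq_nnnorm, habs x]; exact le_add_self
  have hae_p : ∀ᵐ ω ∂μ, gp ω < ∞ := ae_lt_top hmp hfin_p
  have hae_n : ∀ᵐ ω ∂μ, gn ω < ∞ := ae_lt_top hmn hfin_n
  have heq : ∀ᵐ ω ∂μ, ∫ x, f x ∂(Φ ω) = (gp ω).toReal - (gn ω).toReal := by
    filter_upwards [hae_p, hae_n] with ω hp hn
    have hi : Integrable f (Φ ω) := by
      refine ⟨hf.aestronglyMeasurable, ?_⟩
      have : ∫⁻ x, (‖f x‖₊ : ℝ≥0∞) ∂(Φ ω) = gp ω + gn ω := by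
        rw [hgp, hgn]
        simp only [← lintegral_add_left hf.ennreal_ofReal]
        exact lintegral_congr fun x => habs x
      unfold HasFiniteIntegral
      simp only [enorm_eq_nnnorm]
      rw [this]
      exact ENNReal.add_lt_top.2 ⟨hp, hn⟩
    exact integral_eq_lintegral_pos_part_sub_lintegral_neg_part hi
  have hip : Integrable (fun ω => (gp ω).toReal) μ :=
    integrable_toReal_of_lintegral_ne_top hmp.aemeasurable hfin_p
  have hin : Integrable (fun ω => (gn ω).toReal) μ :=
    integrable_toReal_of_lintegral_ne_top hmn.aemeasurable hfin_n
  calc ∫ ω, ∫ x, f x ∂(Φ ω) ∂μ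
      = ∫ ω, ((gp ω).toReal - (gn ω).toReal) ∂μ := integral_congr_ae heq
    _ = (∫⁻ ω, gp ω ∂μ).toReal - (∫⁻ ω, gn ω ∂μ).toReal := by
        rw [integral_sub hip hin, integral_toReal hmp.aemeasurable hae_p,
          integral_toReal hmn.aemeasurable hae_n]
    _ = ∫ x, f x ∂Λ := by
        rw [key _ hf.ennreal_ofReal, key (fun x => ENNReal.ofReal (-f x)) hf.neg.ennreal_ofReal,
          ← integral_eq_lintegral_pos_part_sub_lintegral_neg_part hint]

/-- **Strictly consistent scoring for the normalized intensity measure.**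
If `S'` is strictly consistent for the identity on a class `𝓕` of probability
measures containing the normalized intensity `Λ* = Λ / Λ(X)` of the point
process `Φ`, then `S(Q, φ) = ∫ S'(Q, x) dφ(x)` is strictly consistent for the
normalized intensity measure. -/
theorem normalized_intensity_score_strictly_consistent
    {Ω X : Type*} [MeasurableSpace Ω] [MeasurableSpace X]
    (μ : Measure Ω) [IsProbabilityMeasure μ]
    (Φ : Ω → Measure X)
    (hΦmeas : ∀ B : Set X, MeasurableSet B → Measurable fun ω => Φ ω B)
    (Λ : Measure X) [IsFiniteMeasure Λ]
    (hΛ : ∀ B : Set X, MeasurableSet B → Λ B = ∫⁻ ω, Φ ω B ∂μ)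
    (hΛpos : 0 < Λ Set.univ)
    (𝓕 : Set (Measure X)) (hprob : ∀ P ∈ 𝓕, IsProbabilityMeasure P)
    (hmem : (Λ Set.univ)⁻¹ • Λ ∈ 𝓕)
    (S' : Measure X → X → ℝ)
    (hS'meas : ∀ Q ∈ 𝓕, Measurable (S' Q))
    (hS'int : ∀ Q ∈ 𝓕, Integrable (S' Q) Λ)
    (hS' : ∀ P ∈ 𝓕, ∀ Q ∈ 𝓕,
      (∫ x, S' P x ∂P ≤ ∫ x, S' Q x ∂P) ∧
      (∫ x, S' Q x ∂P = ∫ x, S' P x ∂P → Q = P)) :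
    ∀ Q ∈ 𝓕,
      (∫ ω, ∫ x, S' ((Λ Set.univ)⁻¹ • Λ) x ∂(Φ ω) ∂μ ≤
        ∫ ω, ∫ x, S' Q x ∂(Φ ω) ∂μ) ∧
      (∫ ω, ∫ x, S' Q x ∂(Φ ω) ∂μ =
          ∫ ω, ∫ x, S' ((Λ Set.univ)⁻¹ • Λ) x ∂(Φ ω) ∂μ ↔
        Q = (Λ Set.univ)⁻¹ • Λ) := by
  intro Q hQ
  have hΦm : Measurable Φ := Measure.measurable_of_measurable_coe _ hΦmeas
  have hbind : Λ = μ.bind Φ := by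
    ext s hs
    rw [hΛ s hs, Measure.bind_apply hs hΦm.aemeasurable]
  set c := Λ Set.univ with hc
  have hc0 : c ≠ 0 := hΛpos.ne'
  have hctop : c ≠ ∞ := measure_ne_top Λ _
  have hcpos : 0 < c.toReal := ENNReal.toReal_pos hc0 hctop
  set P := c⁻¹ • Λ with hP
  have hscale : ∀ R, ∫ x, S' R x ∂P = (c.toReal)⁻¹ * ∫ x, S' R x ∂Λ := fun R => by
    rw [hP, integral_smul_measure, ENNReal.toReal_inv, smul_eq_mul]
  have hC : ∀ R ∈ 𝓕, ∫ ω, ∫ x, S' R x ∂(Φ ω) ∂μ = ∫ x, S' R x ∂Λ := fun R hR =>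
    campbell_aux μ Φ hΦm Λ hbind (hS'meas R hR) (hS'int R hR)
  obtain ⟨h1, h2⟩ := hS' P hmem Q hQ
  rw [hscale P, hscale Q] at h1
  have hinv : 0 < (c.toReal)⁻¹ := inv_pos.2 hcpos
  constructor
  · rw [hC P hmem, hC Q hQ]
    exact le_of_mul_le_mul_left h1 hinv
  · rw [hC P hmem, hC Q hQ]
    constructor
    · intro h
      exact h2 (by rw [hscale P, hscale Q, h])
    · intro h
      rw [h]
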